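/- In the ring of formal power series in w over ℚ, one has the identity (e^w − 1)^2 · ( 1 − Σ_{n≥0} (B_{n+2}/(n+2)) · w^{n+2}/n! ) = w^2 · e^w, where e^w denotes the exponential power series Σ_{n≥0} w^n/n!. (Equivalently, e^w/(e^w−1)^2 = 1/w^2 − Σ_{n≥0} (B_{n+2}/(n+2)) w^n/n!.) -/

import Mathlib

open PowerSeries

private lemma deriv_exp' : d⁄dX ℚ (PowerSeries.exp ℚ) = PowerSeries.exp ℚ := by
  ext n
  rw [PowerSeries.coeff_derivative, coeff_exp, coeff_exp]
  simp only [map_div₀, map_one, map_natCast, eq_ratCast, Rat.cast_div, Rat.cast_one,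
    Rat.cast_natCast]
  rw [Nat.factorial_succ]
  have h1 : ((n : ℚ) + 1) ≠ 0 := by positivity
  have h2 : ((n.factorial : ℚ)) ≠ 0 := by exact_mod_cast n.factorial_ne_zero
  field_simp
  norm_cast

private lemma key :
    (PowerSeries.mk (fun m : ℕ =>
        if m = 0 then (1 : ℚ)
        else if m = 1 then 0
        else -(bernoulli m / ((m : ℚ) * (Nat.factorial (m - 2) : ℚ))))) =
    bernoulliPowerSeries ℚ - X * d⁄dX ℚ (bernoulliPowerSeries ℚ) := by
  ext n
  rw [map_sub, coeff_mk]
  match n with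
  | 0 =>
    simp [bernoulliPowerSeries, coeff_mk]
  | 1 =>
    simp [bernoulliPowerSeries, PowerSeries.coeff_succ_X_mul, PowerSeries.coeff_derivative,
      coeff_mk]
  | (m + 2) =>
    rw [if_neg (by omega), if_neg (by omega), PowerSeries.coeff_succ_X_mul,
      PowerSeries.coeff_derivative]
    simp only [bernoulliPowerSeries, coeff_mk, eq_ratCast, Rat.cast_div, Rat.cast_natCast]
    have h2 : ((m + 2 : ℕ) : ℚ) ≠ 0 := by positivity
    have h3 : ((m.factorial : ℚ)) ≠ 0 := by exact_mod_cast m.factorial_ne_zero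
    have hfact : ((m + 2).factorial : ℚ) = ((m : ℚ) + 2) * ((m : ℚ) + 1) * m.factorial := by
      rw [Nat.factorial_succ, Nat.factorial_succ]
      push_cast
      ring
    push_cast
    rw [hfact]
    have h4 : ((m : ℚ) + 2) ≠ 0 := by positivity
    have h5 : ((m : ℚ) + 1) ≠ 0 := by positivity
    field_simp
    ring

/-- In `ℚ⟦w⟧`: `(e^w − 1)^2 · (1 − Σ_{n≥0} (B_{n+2}/(n+2)) · w^{n+2}/n!) = w^2 · e^w`,
where `B_k` are the Bernoulli numbers (with `B_1 = −1/2`). -/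
theorem stmt0 :
    (PowerSeries.exp ℚ - 1) ^ 2 *
      PowerSeries.mk (fun m : ℕ =>
        if m = 0 then (1 : ℚ)
        else if m = 1 then 0
        else -(bernoulli m / ((m : ℚ) * (Nat.factorial (m - 2) : ℚ)))) =
    PowerSeries.X ^ 2 * PowerSeries.exp ℚ := by
  rw [key]
  have h1 := bernoulliPowerSeries_mul_exp_sub_one ℚ
  have h2 : d⁄dX ℚ (bernoulliPowerSeries ℚ) * (PowerSeries.exp ℚ - 1) +
      bernoulliPowerSeries ℚ * PowerSeries.exp ℚ = 1 := by
    have h := congrArg (d⁄dX ℚ) h1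
    rw [Derivation.leibniz, map_sub, deriv_exp', Derivation.map_one_eq_zero, sub_zero, smul_eq_mul, smul_eq_mul,
      PowerSeries.derivative_X] at h
    linear_combination h
  linear_combination (PowerSeries.exp ℚ - 1 + X * PowerSeries.exp ℚ) * h1 -
    X * (PowerSeries.exp ℚ - 1) * h2
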